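/- Let p ∈ (0,1/2), p̄ = 1−p, and let (λ₁,λ₂) ∈ ℝ² satisfy |λ₁| + λ₂ ≤ D(1/2‖p). Then E[exp(λ₁ T̃ + λ₂ |T̃|)] = ( 2 − √(1 − 4p p̄ e^{2(λ₁+λ₂)}) − √(1 − 4p p̄ e^{2(λ₂−λ₁)}) ) / (4p), where the defining series converges absolutely. -/

import Mathlib

open Finset Filter

example (n : ℕ) : (n+1) * Nat.centralBinom (n+1) = 2 * (2*n+1) * Nat.centralBinom n :=
  Nat.succ_mul_centralBinom_succ n

lemma cb_sq_le (n : ℕ) : (2*n+1) * (Nat.centralBinom n)^2 ≤ 16^n := by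
  induction n with
  | zero => simp [Nat.centralBinom]
  | succ n ih =>
    have h1 := Nat.succ_mul_centralBinom_succ n
    have key : (n+1)^2 * ((2*(n+1)+1) * (Nat.centralBinom (n+1))^2)
        = (2*n+3) * (4*(2*n+1)) * ((2*n+1) * (Nat.centralBinom n)^2) := by
      have : ((n+1) * Nat.centralBinom (n+1))^2 = (2*(2*n+1)*Nat.centralBinom n)^2 := by rw [h1]
      nlinarith [this]
    have h2 : (2*n+3) * (4*(2*n+1)) ≤ 16 * (n+1)^2 := by nlinarith
    have h3 : (n+1)^2 * ((2*(n+1)+1) * (Nat.centralBinom (n+1))^2) ≤ (n+1)^2 * 16^(n+1) := by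
      calc (n+1)^2 * ((2*(n+1)+1) * (Nat.centralBinom (n+1))^2)
          = (2*n+3) * (4*(2*n+1)) * ((2*n+1) * (Nat.centralBinom n)^2) := key
        _ ≤ (16 * (n+1)^2) * 16^n := Nat.mul_le_mul h2 ih
        _ = (n+1)^2 * 16^(n+1) := by ring
    exact Nat.le_of_mul_le_mul_left h3 (by positivity)

lemma tendsto_cb : Tendsto (fun n : ℕ => (Nat.centralBinom n : ℝ)/4^n) atTop (nhds 0) := by
  set a : ℕ → ℝ := fun n => (Nat.centralBinom n : ℝ)/4^n with ha
  have h1 : Tendsto (fun n : ℕ => 2*(n:ℝ)+1) atTop atTop :=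
    tendsto_atTop_add_const_right _ 1
      ((tendsto_natCast_atTop_atTop (R := ℝ)).const_mul_atTop (by norm_num : (0:ℝ) < 2))
  have hlim' : Tendsto (fun n : ℕ => 1/(2*(n:ℝ)+1)) atTop (nhds 0) := by
    simpa [one_div, Function.comp_def] using tendsto_inv_atTop_zero.comp h1
  have hb : ∀ n : ℕ, (a n)^2 ≤ 1/(2*(n:ℝ)+1) := by
    intro n
    have h : (2*(n:ℝ)+1) * (Nat.centralBinom n : ℝ)^2 ≤ (16:ℝ)^n := by
      exact_mod_cast Nat.cast_le.2 (cb_sq_le n)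
    have h16 : ((4:ℝ)^n)^2 = 16^n := by
      rw [← pow_mul, mul_comm, pow_mul]; norm_num
    rw [ha]
    rw [div_pow, div_le_div_iff₀ (by positivity) (by positivity)]
    nlinarith [h, h16]
  have hsq : Tendsto (fun n => (a n)^2) atTop (nhds 0) :=
    squeeze_zero (fun n => by positivity) hb hlim'
  have hcont := (Real.continuous_sqrt.tendsto 0).comp hsq
  simp only [Function.comp_def, Real.sqrt_zero] at hcont
  refine hcont.congr (fun n => ?_)
  exact Real.sqrt_sq (by rw [ha]; positivity)

lemma hasSum_quarter : HasSum (fun j : ℕ => (catalan j : ℝ) * (1/4)^(j+1)) (1/2) := by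
  have key : ∀ j : ℕ, (catalan j : ℝ) * (1/4)^(j+1)
      = ((Nat.centralBinom j : ℝ)/4^j - (Nat.centralBinom (j+1) : ℝ)/4^(j+1)) / 2 := by
    intro j
    have h1 : ((j:ℝ)+1) * (Nat.centralBinom (j+1) : ℝ) = 2*(2*j+1) * (Nat.centralBinom j : ℝ) := by
      exact_mod_cast congrArg (Nat.cast : ℕ → ℝ) (Nat.succ_mul_centralBinom_succ j)
    have h2 : ((j:ℝ)+1) * (catalan j : ℝ) = (Nat.centralBinom j : ℝ) := by
      exact_mod_cast congrArg (Nat.cast : ℕ → ℝ) (succ_mul_catalan_eq_centralBinom j)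
    have hj : ((j:ℝ)+1) ≠ 0 := by positivity
    have e1 : (Nat.centralBinom (j+1) : ℝ) = 2*(2*j+1) * (Nat.centralBinom j : ℝ)/((j:ℝ)+1) := by
      field_simp; linarith [h1]
    have e2 : (catalan j : ℝ) = (Nat.centralBinom j : ℝ)/((j:ℝ)+1) := by
      field_simp; linarith [h2]
    rw [e1, e2]
    simp only [div_pow, one_pow, pow_succ]
    field_simp
    ring
  rw [hasSum_iff_tendsto_nat_of_nonneg (fun i => by positivity)]
  have hps : ∀ n : ℕ, ∑ i ∈ range n, (catalan i : ℝ) * (1/4)^(i+1)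
      = ((Nat.centralBinom 0 : ℝ)/4^0 - (Nat.centralBinom n : ℝ)/4^n)/2 := by
    intro n
    calc ∑ i ∈ range n, (catalan i : ℝ) * (1/4)^(i+1)
        = ∑ i ∈ range n, ((Nat.centralBinom i : ℝ)/4^i - (Nat.centralBinom (i+1) : ℝ)/4^(i+1))/2 :=
          Finset.sum_congr rfl (fun i _ => key i)
      _ = (∑ i ∈ range n, ((Nat.centralBinom i : ℝ)/4^i - (Nat.centralBinom (i+1) : ℝ)/4^(i+1)))/2 := by
          rw [Finset.sum_div]
      _ = ((Nat.centralBinom 0 : ℝ)/4^0 - (Nat.centralBinom n : ℝ)/4^n)/2 := by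
          rw [Finset.sum_range_sub' (fun j => (Nat.centralBinom j : ℝ)/4^j) n]
  simp only [hps]
  have hT := (tendsto_const_nhds
      (x := ((Nat.centralBinom 0 : ℝ)/4^0)) (f := atTop (α := ℕ))).sub tendsto_cb |>.div_const 2
  simpa [Nat.centralBinom] using hT

lemma summable_cat {x : ℝ} (hx0 : 0 ≤ x) (hx : x ≤ 1/4) :
    Summable (fun j : ℕ => (catalan j : ℝ) * x^(j+1)) := by
  refine Summable.of_nonneg_of_le (fun j => by positivity)
    (fun j => mul_le_mul_of_nonneg_left (pow_le_pow_left₀ hx0 hx _) (by positivity))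
    hasSum_quarter.summable

lemma catalanGF {x : ℝ} (hx0 : 0 ≤ x) (hx : x ≤ 1/4) :
    HasSum (fun j : ℕ => (catalan j : ℝ) * x^(j+1)) ((1 - Real.sqrt (1-4*x))/2) := by
  set f : ℕ → ℝ := fun j => (catalan j : ℝ) * x^(j+1) with hfdef
  have hsum : Summable f := summable_cat hx0 hx
  set F := ∑' j, f j with hFdef
  have hf : HasSum f F := hsum.hasSum
  have hF2 : F ≤ 1/2 := by
    rw [← hasSum_quarter.tsum_eq]
    exact Summable.tsum_le_tsum
      (fun j => mul_le_mul_of_nonneg_left (pow_le_pow_left₀ hx0 hx _) (by positivity))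
      hsum hasSum_quarter.summable
  have hnorm : Summable (fun j => ‖f j‖) :=
    hsum.congr (fun j => (Real.norm_of_nonneg (by rw [hfdef]; positivity)).symm)
  have hc := hasSum_sum_range_mul_of_summable_norm hnorm hnorm
  have hconv : ∀ n : ℕ, ∑ k ∈ range (n+1), f k * f (n-k) = (catalan (n+1) : ℝ) * x^(n+2) := by
    intro n
    have hcs : (catalan (n+1) : ℝ) = ∑ k ∈ range (n+1), (catalan k : ℝ) * (catalan (n-k) : ℝ) := by
      rw [catalan_succ]
      push_cast
      rw [← Finset.sum_range (fun k => (catalan k : ℝ) * (catalan (n-k) : ℝ))]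
    rw [hcs, Finset.sum_mul]
    refine Finset.sum_congr rfl (fun k hk => ?_)
    have hkn : k ≤ n := Nat.lt_succ_iff.mp (Finset.mem_range.mp hk)
    have hx2 : x^(k+1) * x^(n-k+1) = x^(n+2) := by
      rw [← pow_add]; congr 1; omega
    calc f k * f (n-k) = (catalan k : ℝ) * (catalan (n-k) : ℝ) * (x^(k+1) * x^(n-k+1)) := by
          rw [hfdef]; ring
      _ = (catalan k : ℝ) * (catalan (n-k) : ℝ) * x^(n+2) := by rw [hx2]
  simp only [hconv] at hc
  have hshift : HasSum (fun n => f (n+1)) (F - x) := by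
    have h0 : (F - x) + ∑ i ∈ range 1, f i = F := by
      simp [hfdef]
    exact (hasSum_nat_add_iff 1).2 (by rwa [h0])
  have h2 : HasSum (fun n => (catalan (n+1) : ℝ) * x^(n+2)) (F - x) := by
    refine hshift.congr_fun (fun n => ?_)
    rw [hfdef]
  have heq : (∑' n, f n) * (∑' n, f n) = F - x := hc.unique h2
  rw [← hFdef] at heq
  have hroot : Real.sqrt (1-4*x) = 1 - 2*F := by
    have hsq : 1 - 4*x = (1-2*F)^2 := by nlinarith [heq]
    rw [hsq, Real.sqrt_sq (by linarith)]
  have : (1 - Real.sqrt (1-4*x))/2 = F := by rw [hroot]; ring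
  rw [this]
  exact hf

noncomputable section

/-- Kullback–Leibler divergence `D(1/2 ‖ p)` between Bernoulli(1/2) and Bernoulli(p). -/
def Dhalf (p : ℝ) : ℝ := (1/2) * Real.log ((1/2)/p) + (1/2) * Real.log ((1/2)/(1-p))

/-- For `p ∈ (0,1/2)`, `p̄ = 1−p`, and `|λ₁| + λ₂ ≤ D(1/2‖p)`, the defining
series of `E[exp(λ₁T̃+λ₂|T̃|)]`, namely
`∑_{k≥1} (1/(2p))(p p̄)^k C_{k−1}(e^{2k(λ₁+λ₂)} + e^{2k(λ₂−λ₁)})` (reindexed by `k = j+1`),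
converges absolutely (all terms are nonnegative), and its sum equals
`(2 − √(1 − 4p p̄ e^{2(λ₁+λ₂)}) − √(1 − 4p p̄ e^{2(λ₂−λ₁)}))/(4p)`. -/
theorem stmt15 (p l1 l2 : ℝ) (hp : p ∈ Set.Ioo (0:ℝ) (1/2))
    (h : |l1| + l2 ≤ Dhalf p) :
    Summable (fun j : ℕ =>
      (1/(2*p)) * (p*(1-p))^(j+1) * (catalan j : ℝ) *
        (Real.exp (2*((j:ℝ)+1)*(l1+l2)) + Real.exp (2*((j:ℝ)+1)*(l2-l1)))) ∧
    ∑' j : ℕ, (1/(2*p)) * (p*(1-p))^(j+1) * (catalan j : ℝ) *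
        (Real.exp (2*((j:ℝ)+1)*(l1+l2)) + Real.exp (2*((j:ℝ)+1)*(l2-l1)))
      = (2 - Real.sqrt (1 - 4*p*(1-p)*Real.exp (2*(l1+l2)))
          - Real.sqrt (1 - 4*p*(1-p)*Real.exp (2*(l2-l1)))) / (4*p) := by
  
  obtain ⟨hp0, hp2⟩ := hp
  have hp1 : (0:ℝ) < 1 - p := by linarith
  set x1 := p*(1-p)*Real.exp (2*(l1+l2)) with hx1
  set x2 := p*(1-p)*Real.exp (2*(l2-l1)) with hx2
  have hD : Real.exp (2 * Dhalf p) = 1/(4*p*(1-p)) := by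
    rw [Dhalf, show 2*((1/2)*Real.log ((1/2)/p) + (1/2)*Real.log ((1/2)/(1-p)))
        = Real.log ((1/2)/p) + Real.log ((1/2)/(1-p)) by ring,
      Real.exp_add, Real.exp_log (by positivity), Real.exp_log (by positivity)]
    field_simp
    ring
  have key : ∀ a : ℝ, a ≤ Dhalf p → p*(1-p)*Real.exp (2*a) ≤ 1/4 := by
    intro a ha
    have he : Real.exp (2*a) ≤ Real.exp (2*Dhalf p) := Real.exp_le_exp.2 (by linarith)
    rw [hD] at he
    calc p*(1-p)*Real.exp (2*a) ≤ p*(1-p)*(1/(4*p*(1-p))) :=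
          mul_le_mul_of_nonneg_left he (by positivity)
      _ = 1/4 := by field_simp
  have h1le : l1 + l2 ≤ Dhalf p := le_trans (by linarith [le_abs_self l1]) h
  have h2le : l2 - l1 ≤ Dhalf p := le_trans (by linarith [neg_abs_le l1]) h
  have hx1b : x1 ≤ 1/4 := key _ h1le
  have hx2b : x2 ≤ 1/4 := key _ h2le
  have hx1p : 0 ≤ x1 := by positivity
  have hx2p : 0 ≤ x2 := by positivity
  have H1 := catalanGF hx1p hx1b
  have H2 := catalanGF hx2p hx2b
  have Hcomb := (H1.add H2).mul_left (1/(2*p))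
  have Hfinal : HasSum (fun j : ℕ =>
      (1/(2*p)) * (p*(1-p))^(j+1) * (catalan j : ℝ) *
        (Real.exp (2*((j:ℝ)+1)*(l1+l2)) + Real.exp (2*((j:ℝ)+1)*(l2-l1))))
      ((1/(2*p)) * ((1 - Real.sqrt (1-4*x1))/2 + (1 - Real.sqrt (1-4*x2))/2)) := by
    refine Hcomb.congr_fun (fun j => ?_)
    have e1 : Real.exp (2*((j:ℝ)+1)*(l1+l2)) = (Real.exp (2*(l1+l2)))^(j+1) := by
      rw [← Real.exp_nat_mul]; congr 1; push_cast; ring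
    have e2 : Real.exp (2*((j:ℝ)+1)*(l2-l1)) = (Real.exp (2*(l2-l1)))^(j+1) := by
      rw [← Real.exp_nat_mul]; congr 1; push_cast; ring
    have m1 : x1^(j+1) = (p*(1-p))^(j+1) * (Real.exp (2*(l1+l2)))^(j+1) := by
      rw [hx1, mul_pow]
    have m2 : x2^(j+1) = (p*(1-p))^(j+1) * (Real.exp (2*(l2-l1)))^(j+1) := by
      rw [hx2, mul_pow]
    rw [e1, e2, m1, m2]
    ring
  refine ⟨Hfinal.summable, ?_⟩
  rw [Hfinal.tsum_eq]
  have r1 : 1 - 4*x1 = 1 - 4*p*(1-p)*Real.exp (2*(l1+l2)) := by rw [hx1]; ring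
  have r2 : 1 - 4*x2 = 1 - 4*p*(1-p)*Real.exp (2*(l2-l1)) := by rw [hx2]; ring
  rw [r1, r2]
  field_simp
  ring
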